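/- arXiv:math/0403362 — 2 statements merged into one kernel-verified Lean document; each statement's English description precedes it below -/
import Mathlib

section
/- Let n ≥ 1, m ≥ 1, and α ≥ 0 be integers. Then at every point z ∈ ℂⁿ ∖ {0}, Σ_{j=1}^n ∂/∂z̄_j [ z̄_n^{mα} · (∏_{i=1}^n z̄_i^{m-1}) · z̄_j · r_m(z)^{-(α+n)} ] = 0. (This scalar divergence identity expresses that the (0, n−1)-form u_{α,m}(1, …, n) = (α+n−1)! z̄_n^{mα} (z̄_1⋯z̄_n)^{m-1} r_m^{-(α+n)} Σ_{j=1}^n (−1)^j z̄_j dz̄_1∧…∧(dz̄_j omitted)∧…∧dz̄_n is ∂̄-closed on ℂⁿ ∖ {0}.) -/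
open Complex

/-- The Wirtinger derivative `∂f/∂z̄ⱼ = (1/2)(∂f/∂xⱼ + i ∂f/∂yⱼ)` of a function
`f : ℂⁿ → ℂ` at `z` with respect to the `j`-th antiholomorphic coordinate, expressed via
the real Fréchet derivative. -/
noncomputable def wirtingerBar {n : ℕ} (f : (Fin n → ℂ) → ℂ) (z : Fin n → ℂ) (j : Fin n) : ℂ :=
  (1 / 2) * (fderiv ℝ f z (Pi.single j 1) + Complex.I * fderiv ℝ f z (Pi.single j Complex.I))

section Aux

open ContinuousLinearMap

lemma hasFDerivAt_conj_pow' {ι : Type*} [Fintype ι] (e : ℕ) (i : ι) (z : ι → ℂ) :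
    HasFDerivAt (fun w : ι → ℂ => (starRingEnd ℂ) (w i) ^ e)
      (((e : ℂ) * (starRingEnd ℂ) (z i) ^ (e - 1)) •
        ((Complex.conjCLE : ℂ ≃L[ℝ] ℂ).toContinuousLinearMap.comp (ContinuousLinearMap.proj i))) z := by
  have hl : HasFDerivAt (fun w : ι → ℂ => (starRingEnd ℂ) (w i))
      ((Complex.conjCLE : ℂ ≃L[ℝ] ℂ).toContinuousLinearMap.comp (ContinuousLinearMap.proj i)) z := by
    exact ((Complex.conjCLE : ℂ ≃L[ℝ] ℂ).toContinuousLinearMap.comp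
      (ContinuousLinearMap.proj (R := ℝ) (φ := fun _ : ι => ℂ) i)).hasFDerivAt
  have hp : HasDerivAt (fun x : ℂ => x ^ e) ((e : ℂ) * ((starRingEnd ℂ) (z i)) ^ (e - 1))
      ((starRingEnd ℂ) (z i)) := hasDerivAt_pow e _
  have := (hp.hasFDerivAt.restrictScalars ℝ).comp z hl
  refine this.congr_fderiv ?_
  ext v
  simp [mul_comm]

lemma hasFDerivAt_normSq_pow' {ι : Type*} [Fintype ι] (mm : ℕ) (i : ι) (z : ι → ℂ) :
    HasFDerivAt (fun w : ι → ℂ => Complex.normSq (w i) ^ mm)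
      (((mm : ℝ) * Complex.normSq (z i) ^ (mm - 1)) •
        ((2 * (z i).re) • (Complex.reCLM.comp (ContinuousLinearMap.proj i)) +
         (2 * (z i).im) • (Complex.imCLM.comp (ContinuousLinearMap.proj i)))) z := by
  have hρ : HasFDerivAt (fun w : ι → ℂ => (w i).re)
      (Complex.reCLM.comp (ContinuousLinearMap.proj i)) z := by
    exact (Complex.reCLM.comp (ContinuousLinearMap.proj (R := ℝ) (φ := fun _ : ι => ℂ) i)).hasFDerivAt
  have hι : HasFDerivAt (fun w : ι → ℂ => (w i).im)
      (Complex.imCLM.comp (ContinuousLinearMap.proj i)) z := by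
    exact (Complex.imCLM.comp (ContinuousLinearMap.proj (R := ℝ) (φ := fun _ : ι => ℂ) i)).hasFDerivAt
  have hq : HasFDerivAt (fun w : ι → ℂ => Complex.normSq (w i))
      ((2 * (z i).re) • (Complex.reCLM.comp (ContinuousLinearMap.proj i)) +
       (2 * (z i).im) • (Complex.imCLM.comp (ContinuousLinearMap.proj i))) z := by
    have := (hρ.mul hρ).add (hι.mul hι)
    refine (this.congr_of_eventuallyEq ?_).congr_fderiv ?_
    · filter_upwards with w; simp [Complex.normSq_apply]
    · ext v; simp; ring
  have hp : HasDerivAt (fun x : ℝ => x ^ mm)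
      ((mm : ℝ) * (Complex.normSq (z i)) ^ (mm - 1)) (Complex.normSq (z i)) :=
    hasDerivAt_pow mm _
  exact hp.comp_hasFDerivAt z hq

lemma wirtingerBar_prod_zpow {nn : ℕ} (m : ℕ) (N : ℤ) (e : Fin nn → ℕ)
    (z : Fin nn → ℂ) (hr : (0:ℝ) < ∑ i, Complex.normSq (z i) ^ m) (j : Fin nn) :
    wirtingerBar (fun w => (∏ i, (starRingEnd ℂ) (w i) ^ e i) *
        ((∑ i, Complex.normSq (w i) ^ m : ℝ) : ℂ) ^ N) z j
      = (e j : ℂ) * (∏ k ∈ Finset.univ.erase j, (starRingEnd ℂ) (z k) ^ e k) *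
          (starRingEnd ℂ) (z j) ^ (e j - 1) *
          ((∑ i, Complex.normSq (z i) ^ m : ℝ) : ℂ) ^ N
        + (∏ i, (starRingEnd ℂ) (z i) ^ e i) * (N : ℂ) * (m : ℂ) *
          ((Complex.normSq (z j) : ℝ) : ℂ) ^ (m - 1) * z j *
          ((∑ i, Complex.normSq (z i) ^ m : ℝ) : ℂ) ^ (N - 1) := by
  classical
  have hrne : (∑ i, Complex.normSq (z i) ^ m) ≠ 0 := ne_of_gt hr
  have Hg : HasFDerivAt (fun w : Fin nn → ℂ => ∏ i, (starRingEnd ℂ) (w i) ^ e i)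
      (∑ i : Fin nn, (∏ k ∈ Finset.univ.erase i, (starRingEnd ℂ) (z k) ^ e k) •
        (((e i : ℂ) * (starRingEnd ℂ) (z i) ^ (e i - 1)) •
          ((Complex.conjCLE : ℂ ≃L[ℝ] ℂ).toContinuousLinearMap.comp
            (ContinuousLinearMap.proj i)))) z :=
    HasFDerivAt.finset_prod (fun i _ => hasFDerivAt_conj_pow' (e i) i z)
  have Hr : HasFDerivAt (fun w : Fin nn → ℂ => ∑ i, Complex.normSq (w i) ^ m)
      (∑ i : Fin nn, ((m : ℝ) * Complex.normSq (z i) ^ (m - 1)) •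
        ((2 * (z i).re) • (Complex.reCLM.comp (ContinuousLinearMap.proj i)) +
         (2 * (z i).im) • (Complex.imCLM.comp (ContinuousLinearMap.proj i)))) z :=
    HasFDerivAt.fun_sum (fun i _ => hasFDerivAt_normSq_pow' m i z)
  have Hzp : HasDerivAt (fun x : ℝ => x ^ N)
      ((N : ℝ) * (∑ i, Complex.normSq (z i) ^ m) ^ (N - 1)) (∑ i, Complex.normSq (z i) ^ m) :=
    hasDerivAt_zpow N _ (Or.inl hrne)
  have Hh0 := Hzp.comp_hasFDerivAt z Hr
  have Hh1 := Complex.ofRealCLM.hasFDerivAt.comp z Hh0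
  have Hh : HasFDerivAt (fun w : Fin nn → ℂ => ((∑ i, Complex.normSq (w i) ^ m : ℝ) : ℂ) ^ N)
      (Complex.ofRealCLM.comp (((N : ℝ) * (∑ i, Complex.normSq (z i) ^ m) ^ (N - 1)) •
        (∑ i : Fin nn, ((m : ℝ) * Complex.normSq (z i) ^ (m - 1)) •
          ((2 * (z i).re) • (Complex.reCLM.comp (ContinuousLinearMap.proj i)) +
           (2 * (z i).im) • (Complex.imCLM.comp (ContinuousLinearMap.proj i)))))) z := by
    simpa only [Function.comp_def, Complex.ofRealCLM_apply, Complex.ofReal_zpow] using Hh1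
  have H := Hg.fun_mul Hh
  have hfd := H.fderiv
  rw [wirtingerBar]
  rw [hfd]
  simp only [ContinuousLinearMap.add_apply, ContinuousLinearMap.smul_apply,
    ContinuousLinearMap.coe_sum', Finset.sum_apply, ContinuousLinearMap.coe_comp',
    Function.comp_apply, ContinuousLinearMap.proj_apply, Pi.single_apply,
    ContinuousLinearEquiv.coe_coe, Complex.conjCLE_apply, Complex.ofRealCLM_apply,
    apply_ite (starRingEnd ℂ), apply_ite Complex.re, apply_ite Complex.im,
    map_one, map_zero, Complex.one_re, Complex.zero_re, Complex.I_re, Complex.one_im,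
    Complex.zero_im, Complex.I_im, mul_ite, mul_one, mul_zero, smul_ite, smul_zero,
    smul_eq_mul, Complex.reCLM_apply, Complex.imCLM_apply, mul_add,
    Finset.sum_add_distrib, Finset.sum_ite_eq', Finset.mem_univ, if_true,
    Complex.conj_I]
  push_cast [Complex.ofReal_zpow]
  linear_combination ((N:ℂ) * (m:ℂ) * (∏ i, (starRingEnd ℂ) (z i) ^ e i) *
    ((Complex.normSq (z j) : ℝ) : ℂ) ^ (m - 1) *
    ((∑ i, ((Complex.normSq (z i) : ℝ) : ℂ) ^ m)) ^ (N - 1)) *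
    (Complex.re_add_im (z j)) +
    (((∑ i, ((Complex.normSq (z i) : ℝ) : ℂ) ^ m) ^ N *
      (∏ i ∈ Finset.univ.erase j, (starRingEnd ℂ) (z i) ^ e i) * ((e j : ℕ) : ℂ) *
      (starRingEnd ℂ) (z j) ^ (e j - 1) * (-1/2)) * Complex.I_sq)

/-- exponent pattern -/
def expE (n m α : ℕ) (j i : Fin (n + 1)) : ℕ :=
  (m - 1) + (if i = j then 1 else 0) + (if i = Fin.last n then m * α else 0)

end Aux

/-- For integers `n ≥ 1`, `m ≥ 1`, `α ≥ 0` (here the space is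
`ℂ^(n+1)`, `n : ℕ`, so the dimension is `≥ 1`), at every `z ≠ 0`,
`∑_j ∂/∂z̄_j [ z̄ₙ^{mα} (∏ᵢ z̄ᵢ^{m-1}) z̄ⱼ r_m(z)^{-(α+n)} ] = 0`,
where `r_m(z) = ∑ᵢ |zᵢ|^{2m}`; i.e. the form `u_{α,m}(1,…,n)` is `∂̄`-closed. -/
theorem u_alpha_m_top_degree_dbar_closed (n m α : ℕ) (hm : 1 ≤ m) :
    ∀ z : Fin (n + 1) → ℂ, z ≠ 0 →
      ∑ j : Fin (n + 1),
        wirtingerBar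
          (fun w =>
            (starRingEnd ℂ (w (Fin.last n))) ^ (m * α) *
              (∏ i : Fin (n + 1), (starRingEnd ℂ (w i)) ^ (m - 1)) *
              starRingEnd ℂ (w j) *
              (((∑ i : Fin (n + 1), ‖w i‖ ^ (2 * m) : ℝ) : ℂ)) ^
                (-(α + n + 1 : ℤ)))
          z j = 0 := by
  intro z hz
  classical
  set N : ℤ := -(α + n + 1 : ℤ) with hN
  have hm1 : m - 1 + 1 = m := Nat.succ_pred_eq_of_pos hm
  -- positivity of r
  have hr : (0:ℝ) < ∑ i, Complex.normSq (z i) ^ m := by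
    obtain ⟨i0, hi0⟩ := Function.ne_iff.mp hz
    refine Finset.sum_pos' (fun i _ => pow_nonneg (Complex.normSq_nonneg _) m) ⟨i0, Finset.mem_univ i0, ?_⟩
    have h0 : 0 < Complex.normSq (z i0) := Complex.normSq_pos.mpr hi0
    exact pow_pos h0 m
  have hrne : (((∑ i, Complex.normSq (z i) ^ m : ℝ)) : ℂ) ≠ 0 :=
    Complex.ofReal_ne_zero.mpr (ne_of_gt hr)
  -- rewrite the function in product form
  have hfun : ∀ j : Fin (n + 1),
      (fun w : Fin (n + 1) → ℂ =>
        (starRingEnd ℂ (w (Fin.last n))) ^ (m * α) *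
          (∏ i : Fin (n + 1), (starRingEnd ℂ (w i)) ^ (m - 1)) *
          starRingEnd ℂ (w j) *
          (((∑ i : Fin (n + 1), ‖w i‖ ^ (2 * m) : ℝ) : ℂ)) ^ N)
      = fun w : Fin (n + 1) → ℂ =>
          (∏ i, (starRingEnd ℂ) (w i) ^ expE n m α j i) *
            ((∑ i, Complex.normSq (w i) ^ m : ℝ) : ℂ) ^ N := by
    intro j
    funext w
    have habs : ∀ i : Fin (n + 1), ‖w i‖ ^ (2 * m) = Complex.normSq (w i) ^ m := by
      intro i; rw [pow_mul, Complex.sq_norm]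
    simp only [habs]
    have hprod : (∏ i, (starRingEnd ℂ) (w i) ^ expE n m α j i)
        = (∏ i, (starRingEnd ℂ) (w i) ^ (m - 1)) * (starRingEnd ℂ) (w j) *
          (starRingEnd ℂ) (w (Fin.last n)) ^ (m * α) := by
      simp only [expE, pow_add, Finset.prod_mul_distrib, pow_ite, pow_zero, pow_one,
        Finset.prod_ite_eq', Finset.mem_univ, if_true]
    rw [hprod]; ring
  -- per-term value
  have key : ∀ j : Fin (n + 1),
      wirtingerBar
        (fun w =>
          (starRingEnd ℂ (w (Fin.last n))) ^ (m * α) *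
            (∏ i : Fin (n + 1), (starRingEnd ℂ (w i)) ^ (m - 1)) *
            starRingEnd ℂ (w j) *
            (((∑ i : Fin (n + 1), ‖w i‖ ^ (2 * m) : ℝ) : ℂ)) ^ N) z j
      = ((∏ i, (starRingEnd ℂ) (z i) ^ (m - 1)) * (starRingEnd ℂ) (z (Fin.last n)) ^ (m * α)) *
          ((expE n m α j j : ℂ) * ((∑ i, Complex.normSq (z i) ^ m : ℝ) : ℂ) ^ N
            + (N : ℂ) * (m : ℂ) * ((Complex.normSq (z j) : ℝ) : ℂ) ^ m *
              ((∑ i, Complex.normSq (z i) ^ m : ℝ) : ℂ) ^ (N - 1)) := by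
    intro j
    rw [hfun j, wirtingerBar_prod_zpow m N (expE n m α j) z hr j]
    have ha : (∏ k ∈ Finset.univ.erase j, (starRingEnd ℂ) (z k) ^ expE n m α j k) *
        (starRingEnd ℂ) (z j) ^ (expE n m α j j - 1)
        = (∏ i, (starRingEnd ℂ) (z i) ^ (m - 1)) *
          (starRingEnd ℂ) (z (Fin.last n)) ^ (m * α) := by
      have he1 : expE n m α j j - 1
          = (m - 1) + (if j = Fin.last n then m * α else 0) := by
        simp only [expE, eq_self_iff_true, if_true]
        generalize (if j = Fin.last n then m * α else 0) = t
        omega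
      have he2 : ∀ k ∈ Finset.univ.erase j, expE n m α j k
          = (m - 1) + (if k = Fin.last n then m * α else 0) := by
        intro k hk
        have : k ≠ j := (Finset.mem_erase.mp hk).1
        simp [expE, this]
      rw [Finset.prod_congr rfl (fun k hk => by rw [he2 k hk]), he1, mul_comm,
        Finset.mul_prod_erase Finset.univ
          (fun k => (starRingEnd ℂ) (z k) ^ ((m - 1) + (if k = Fin.last n then m * α else 0)))
          (Finset.mem_univ j)]
      simp only [pow_add, Finset.prod_mul_distrib, pow_ite, pow_zero,
        Finset.prod_ite_eq', Finset.mem_univ, if_true]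
    have hb : (∏ i, (starRingEnd ℂ) (z i) ^ expE n m α j i) * z j
        = ((∏ i, (starRingEnd ℂ) (z i) ^ (m - 1)) *
            (starRingEnd ℂ) (z (Fin.last n)) ^ (m * α)) *
          ((Complex.normSq (z j) : ℝ) : ℂ) := by
      have hprod : (∏ i, (starRingEnd ℂ) (z i) ^ expE n m α j i)
          = (∏ i, (starRingEnd ℂ) (z i) ^ (m - 1)) * (starRingEnd ℂ) (z j) *
            (starRingEnd ℂ) (z (Fin.last n)) ^ (m * α) := by
        simp only [expE, pow_add, Finset.prod_mul_distrib, pow_ite, pow_zero, pow_one,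
          Finset.prod_ite_eq', Finset.mem_univ, if_true]
      rw [hprod]
      have : (starRingEnd ℂ) (z j) * z j = ((Complex.normSq (z j) : ℝ) : ℂ) := by
        rw [mul_comm, Complex.mul_conj]
      linear_combination ((∏ i, (starRingEnd ℂ) (z i) ^ (m - 1)) *
        (starRingEnd ℂ) (z (Fin.last n)) ^ (m * α)) * this
    have hq : ((Complex.normSq (z j) : ℝ) : ℂ) * ((Complex.normSq (z j) : ℝ) : ℂ) ^ (m - 1)
        = ((Complex.normSq (z j) : ℝ) : ℂ) ^ m := by
      conv_rhs => rw [← hm1]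
      rw [pow_succ]
      ring
    linear_combination ((expE n m α j j : ℂ) *
        ((∑ i, Complex.normSq (z i) ^ m : ℝ) : ℂ) ^ N) * ha +
      ((N : ℂ) * (m : ℂ) * ((Complex.normSq (z j) : ℝ) : ℂ) ^ (m - 1) *
        ((∑ i, Complex.normSq (z i) ^ m : ℝ) : ℂ) ^ (N - 1)) * hb +
      (((∏ i, (starRingEnd ℂ) (z i) ^ (m - 1)) *
        (starRingEnd ℂ) (z (Fin.last n)) ^ (m * α)) * (N : ℂ) * (m : ℂ) *
        ((∑ i, Complex.normSq (z i) ^ m : ℝ) : ℂ) ^ (N - 1)) * hq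
  rw [Finset.sum_congr rfl (fun j _ => key j), ← Finset.mul_sum]
  -- now the purely algebraic identity
  have hsumE : ∑ j : Fin (n + 1), (expE n m α j j : ℂ) = ((n + 1) * m + m * α : ℕ) := by
    have : ∀ j : Fin (n + 1), expE n m α j j = m + (if j = Fin.last n then m * α else 0) := by
      intro j; simp only [expE, eq_self_iff_true, if_true]
      generalize (if j = Fin.last n then m * α else 0) = t
      omega
    have hnat : (∑ j : Fin (n + 1), expE n m α j j) = (n + 1) * m + m * α := by
      simp only [this, Finset.sum_add_distrib, Finset.sum_const, Finset.card_univ,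
        Fintype.card_fin, smul_eq_mul, Finset.sum_ite_eq', Finset.mem_univ, if_true]
    rw [← hnat, Nat.cast_sum]
  have hsumq : ∑ j : Fin (n + 1), ((Complex.normSq (z j) : ℝ) : ℂ) ^ m
      = ((∑ i, Complex.normSq (z i) ^ m : ℝ) : ℂ) := by
    push_cast; ring
  have hzp : ((∑ i, Complex.normSq (z i) ^ m : ℝ) : ℂ) ^ N
      = ((∑ i, Complex.normSq (z i) ^ m : ℝ) : ℂ) ^ (N - 1) *
        ((∑ i, Complex.normSq (z i) ^ m : ℝ) : ℂ) := by
    rw [← zpow_add_one₀ hrne (N - 1)]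
    norm_num
  rw [mul_eq_zero]
  right
  rw [Finset.sum_add_distrib, ← Finset.sum_mul, hsumE]
  have : ∑ j : Fin (n + 1), (N : ℂ) * (m : ℂ) * ((Complex.normSq (z j) : ℝ) : ℂ) ^ m *
      ((∑ i, Complex.normSq (z i) ^ m : ℝ) : ℂ) ^ (N - 1)
      = (N : ℂ) * (m : ℂ) * ((∑ i, Complex.normSq (z i) ^ m : ℝ) : ℂ) ^ (N - 1) *
        ((∑ i, Complex.normSq (z i) ^ m : ℝ) : ℂ) := by
    rw [← hsumq, Finset.mul_sum]
    apply Finset.sum_congr rfl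
    intro j _
    ring
  rw [this, hzp, hN]
  push_cast
  ring
end

section
/- Let H₁, H₂ be complex Hilbert spaces, let T : H₁ → H₂ be a densely defined closed linear operator, let T* : H₂ → H₁ be its Hilbert space adjoint, and let L ⊆ dom(T*) be a finite-dimensional subspace. Let S denote the restriction of T* to dom(T*) ∩ L^⊥, regarded as a densely defined operator from the Hilbert space L^⊥ to H₁, and let S* : H₁ → L^⊥ be the Hilbert space adjoint of S. Then dom(S*) = dom(T), and S*u = P(Tu) for every u ∈ dom(T), where P : H₂ → L^⊥ is the orthogonal projection. -/
open scoped LinearPMap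

local notation "⟪" x ", " y "⟫" => @inner ℂ _ _ x y

section Aux

variable {H₁ H₂ : Type*}
  [NormedAddCommGroup H₁] [InnerProductSpace ℂ H₁] [CompleteSpace H₁]
  [NormedAddCommGroup H₂] [InnerProductSpace ℂ H₂] [CompleteSpace H₂]

/-- If `T` is closed and densely defined and `⟪T† v, u⟫ = ⟪v, z⟫` for all `v` in the domain
of the adjoint, then `(u, z)` belongs to the graph of `T`. -/
theorem LinearPMap.mem_graph_of_forall_inner_adjoint (T : H₁ →ₗ.[ℂ] H₂)
    (hdense : Dense (T.domain : Set H₁)) (hclosed : T.IsClosed) (u : H₁) (z : H₂)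
    (h : ∀ v : T†.domain, ⟪T† v, u⟫ = ⟪(v : H₂), z⟫) : (u, z) ∈ T.graph := by
  set f : WithLp 2 (H₁ × H₂) →ₗ[ℂ] H₁ × H₂ :=
    (WithLp.linearEquiv 2 ℂ (H₁ × H₂)).toLinearMap with hf
  have hfeq : ∀ y : H₁ × H₂, f ((WithLp.equiv 2 (H₁ × H₂)).symm y) = y := fun y =>
    (WithLp.equiv 2 (H₁ × H₂)).apply_symm_apply y
  set G : Submodule ℂ (WithLp 2 (H₁ × H₂)) := T.graph.comap f with hG
  have hfc : Continuous f := (WithLp.prodContinuousLinearEquiv 2 ℂ H₁ H₂).continuous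
  have hGclosed : _root_.IsClosed (G : Set (WithLp 2 (H₁ × H₂))) := by
    rw [hG]
    rw [Submodule.comap_coe]
    exact hclosed.preimage hfc
  haveI : CompleteSpace G := hGclosed.completeSpace_coe
  have hmemG : ∀ x : T.domain, (WithLp.equiv 2 (H₁ × H₂)).symm ((x : H₁), T x) ∈ G := by
    intro x
    rw [hG, Submodule.mem_comap, hfeq]
    exact T.mem_graph x
  have hmem : (WithLp.equiv 2 (H₁ × H₂)).symm (u, z) ∈ Gᗮᗮ := by
    rw [Submodule.mem_orthogonal]
    intro w hw
    have hw' := (Submodule.mem_orthogonal' G w).mp hw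
    have key : ∀ x : T.domain, ⟪w.fst, (x : H₁)⟫ + ⟪w.snd, T x⟫ = 0 := by
      intro x
      have := hw' _ (hmemG x)
      rw [WithLp.prod_inner_apply, WithLp.equiv_symm_apply, WithLp.ofLp_toLp] at this
      exact this
    have hkey' : ∀ x : T.domain, ⟪-w.fst, (x : H₁)⟫ = ⟪w.snd, T x⟫ := by
      intro x
      rw [inner_neg_left]
      have := key x
      linear_combination -this
    have hbmem : w.snd ∈ T†.domain :=
      T.mem_adjoint_domain_of_exists _ ⟨-w.fst, hkey'⟩
    have hval : T† ⟨w.snd, hbmem⟩ = -w.fst :=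
      LinearPMap.adjoint_apply_eq hdense ⟨w.snd, hbmem⟩ hkey'
    have := h ⟨w.snd, hbmem⟩
    rw [hval] at this
    rw [WithLp.prod_inner_apply, WithLp.equiv_symm_apply, WithLp.ofLp_toLp]
    change ⟪w.fst, u⟫ + ⟪w.snd, z⟫ = 0
    rw [inner_neg_left] at this
    simp only at this ⊢
    linear_combination -this
  rw [Submodule.orthogonal_orthogonal] at hmem
  rw [hG, Submodule.mem_comap, hfeq] at hmem
  exact hmem

/-- The adjoint of a closed densely defined operator is densely defined. -/
theorem LinearPMap.adjoint_domain_dense (T : H₁ →ₗ.[ℂ] H₂)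
    (hdense : Dense (T.domain : Set H₁)) (hclosed : T.IsClosed) :
    Dense ((T†.domain : Submodule ℂ H₂) : Set H₂) := by
  rw [Submodule.dense_iff_topologicalClosure_eq_top, Submodule.topologicalClosure_eq_top_iff]
  rw [Submodule.eq_bot_iff]
  intro y hy
  rw [Submodule.mem_orthogonal] at hy
  have hgraph := T.mem_graph_of_forall_inner_adjoint hdense hclosed 0 y (fun v => by
    rw [inner_zero_right, hy _ v.2])
  rw [LinearPMap.mem_graph_iff] at hgraph
  obtain ⟨x, hx1, hx2⟩ := hgraph
  have hx0 : x = 0 := by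
    ext
    exact hx1
  rw [hx0, map_zero] at hx2
  exact hx2.symm

end Aux

/-- The restriction of a partially defined operator `A : H₂ →ₗ. H₁` to
`dom A ∩ L^⊥`, regarded as a partially defined operator from the Hilbert space `L^⊥`
to `H₁`. -/
noncomputable def LinearPMap.restrictOrthoCompl
    {H₁ H₂ : Type*}
    [NormedAddCommGroup H₁] [InnerProductSpace ℂ H₁]
    [NormedAddCommGroup H₂] [InnerProductSpace ℂ H₂]
    (A : H₂ →ₗ.[ℂ] H₁) (L : Submodule ℂ H₂) : ↥Lᗮ →ₗ.[ℂ] H₁ where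
  domain := A.domain.comap Lᗮ.subtype
  toFun := A.toFun.comp
    (LinearMap.codRestrict A.domain
      (Lᗮ.subtype.comp (A.domain.comap Lᗮ.subtype).subtype) (fun c => c.2))

/-- Let `T : H₁ → H₂` be a densely defined closed operator between
complex Hilbert spaces, `T*` its adjoint, and `L ⊆ dom T*` finite-dimensional.  Let `S`
be the restriction of `T*` to `dom T* ∩ L^⊥`, viewed as a densely defined operator from
`L^⊥` to `H₁`.  Then the adjoint `S* : H₁ → L^⊥` satisfies `dom S* = dom T` and
`S* u = P (T u)` for `u ∈ dom T`, where `P : H₂ → L^⊥` is the orthogonal projection. -/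
theorem adjoint_of_restriction
    {H₁ H₂ : Type*}
    [NormedAddCommGroup H₁] [InnerProductSpace ℂ H₁] [CompleteSpace H₁]
    [NormedAddCommGroup H₂] [InnerProductSpace ℂ H₂] [CompleteSpace H₂]
    (T : H₁ →ₗ.[ℂ] H₂)
    (hdense : Dense (T.domain : Set H₁)) (hclosed : T.IsClosed)
    (L : Submodule ℂ H₂) [FiniteDimensional ℂ L]
    (hL : (L : Set H₂) ⊆ (T†.domain : Set H₂)) :
    ((T†.restrictOrthoCompl L)†).domain = T.domain ∧
      ∀ (u : H₁) (hu : u ∈ T.domain) (hu' : u ∈ ((T†.restrictOrthoCompl L)†).domain),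
        (T†.restrictOrthoCompl L)† ⟨u, hu'⟩ = Submodule.orthogonalProjection Lᗮ (T ⟨u, hu⟩) := by
  haveI : CompleteSpace Lᗮ := L.isClosed_orthogonal.completeSpace_coe
  set S : ↥Lᗮ →ₗ.[ℂ] H₁ := T†.restrictOrthoCompl L with hS
  set P : H₂ →L[ℂ] Lᗮ := Submodule.orthogonalProjection Lᗮ with hPdef
  -- membership of projections in the domain
  have hLL : Lᗮᗮ = L := Submodule.orthogonal_orthogonal L
  have hsub : ∀ v : H₂, v - (P v : H₂) ∈ L := by
    intro v
    have h := Submodule.sub_starProjection_mem_orthogonal (K := Lᗮ) v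
    rwa [hLL] at h
  have hPmem : ∀ v : H₂, v ∈ T†.domain → (P v : Lᗮ) ∈ S.domain := by
    intro v hv
    show ((P v : Lᗮ) : H₂) ∈ T†.domain
    have : ((P v : Lᗮ) : H₂) = v - (v - (P v : H₂)) := by abel
    rw [this]
    exact sub_mem hv (hL (hsub v))
  -- S applied is T† applied
  have hSapp : ∀ x : S.domain, S x = T† ⟨((x : Lᗮ) : H₂), x.2⟩ := fun x => rfl
  -- the inner product of an element of L with an element of Lᗮ vanishes
  have hLperp : ∀ (a : H₂), a ∈ L → ∀ (b : H₂), b ∈ Lᗮ → ⟪a, b⟫ = 0 := by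
    intro a ha b hb
    exact (Submodule.mem_orthogonal L b).mp hb a ha
  -- density of the domain of S in Lᗮ
  have hTadense : Dense ((T†.domain : Submodule ℂ H₂) : Set H₂) :=
    T.adjoint_domain_dense hdense hclosed
  have hSdense : Dense ((S.domain : Submodule ℂ Lᗮ) : Set Lᗮ) := by
    rw [Submodule.dense_iff_topologicalClosure_eq_top, Submodule.topologicalClosure_eq_top_iff]
    rw [Submodule.eq_bot_iff]
    intro y hy
    rw [Submodule.mem_orthogonal] at hy
    have hy2 : (y : H₂) ∈ (T†.domain)ᗮ := by
      rw [Submodule.mem_orthogonal]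
      intro v hv
      have h1 : ⟪v - (P v : H₂), (y : H₂)⟫ = 0 := hLperp _ (hsub v) _ y.2
      have h2 : ⟪((P v : Lᗮ) : H₂), (y : H₂)⟫ = 0 := by
        rw [← Submodule.coe_inner]
        exact hy _ (hPmem v hv)
      have : ⟪v, (y : H₂)⟫ = ⟪v - (P v : H₂), (y : H₂)⟫ + ⟪((P v : Lᗮ) : H₂), (y : H₂)⟫ := by
        rw [← inner_add_left]
        congr 1
        abel
      rw [this, h1, h2, add_zero]
    have : (T†.domain)ᗮ = ⊥ := by
      rw [← Submodule.topologicalClosure_eq_top_iff,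
        ← Submodule.dense_iff_topologicalClosure_eq_top]
      exact hTadense
    have := this ▸ hy2
    ext
    simpa using this
  -- the key computation for the forward direction
  have hcomp : ∀ (u : H₁) (hu : u ∈ T.domain) (x : S.domain),
      ⟪(P (T ⟨u, hu⟩) : Lᗮ), (x : Lᗮ)⟫ = ⟪u, S x⟫ := by
    intro u hu x
    rw [Submodule.coe_inner]
    have h1 : ⟪((P (T ⟨u, hu⟩) : Lᗮ) : H₂), ((x : Lᗮ) : H₂)⟫ = ⟪T ⟨u, hu⟩, ((x : Lᗮ) : H₂)⟫ := by
      have h0 : ⟪T ⟨u, hu⟩ - (P (T ⟨u, hu⟩) : H₂), ((x : Lᗮ) : H₂)⟫ = 0 :=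
        hLperp _ (hsub _) _ (x : Lᗮ).2
      have : ⟪T ⟨u, hu⟩, ((x : Lᗮ) : H₂)⟫
          = ⟪T ⟨u, hu⟩ - (P (T ⟨u, hu⟩) : H₂), ((x : Lᗮ) : H₂)⟫
            + ⟪((P (T ⟨u, hu⟩) : Lᗮ) : H₂), ((x : Lᗮ) : H₂)⟫ := by
        rw [← inner_add_left]; congr 1; abel
      rw [this, h0, zero_add]
    rw [h1, hSapp x]
    have h2 : ⟪T† ⟨((x : Lᗮ) : H₂), x.2⟩, u⟫ = ⟪((x : Lᗮ) : H₂), T ⟨u, hu⟩⟫ :=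
      (LinearPMap.adjoint_isFormalAdjoint hdense) ⟨((x : Lᗮ) : H₂), x.2⟩ ⟨u, hu⟩
    rw [← inner_conj_symm (T ⟨u, hu⟩) (((x : Lᗮ) : H₂)), ← h2, inner_conj_symm]
  -- forward: dom T ⊆ dom S†
  have hfwd : ∀ u : H₁, u ∈ T.domain → u ∈ (S†).domain := by
    intro u hu
    exact LinearPMap.mem_adjoint_domain_of_exists _
      ⟨P (T ⟨u, hu⟩), fun x => hcomp u hu x⟩
  -- reverse: dom S† ⊆ dom T
  have hrev : ∀ u : H₁, u ∈ (S†).domain → u ∈ T.domain := by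
    intro u hu'
    set w : Lᗮ := S† ⟨u, hu'⟩ with hw
    -- finite-rank bounded operator given by T† on L
    set C : ↥L →ₗ[ℂ] H₁ :=
      (T†).toFun.comp (LinearMap.codRestrict (T†).domain L.subtype (fun a => hL a.2)) with hC
    set B : H₂ →L[ℂ] H₁ :=
      (LinearMap.toContinuousLinearMap C).comp (Submodule.orthogonalProjection L) with hB
    set z : H₂ := ContinuousLinearMap.adjoint B u + (w : H₂) with hz
    have hgraph := T.mem_graph_of_forall_inner_adjoint hdense hclosed u z (fun v => by
      -- decompose v = a + b with a ∈ L, b ∈ Lᗮ ∩ dom T†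
      have haL : ((v : H₂) - (P (v : H₂) : H₂)) ∈ L := hsub (v : H₂)
      set va : T†.domain := ⟨(v : H₂) - (P (v : H₂) : H₂), hL haL⟩ with hva
      set vb : T†.domain := ⟨((P (v : H₂) : Lᗮ) : H₂), hPmem _ v.2⟩ with hvb
      have hsplit : v = va + vb := by
        ext
        show (v : H₂) = ((v : H₂) - (P (v : H₂) : H₂)) + ((P (v : H₂) : Lᗮ) : H₂)
        abel
      have hTv : T† v = T† va + T† vb := by rw [hsplit, LinearPMap.map_add]
      -- the b-part
      have hxS : (P (v : H₂) : Lᗮ) ∈ S.domain := hPmem _ v.2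
      have hb1 : ⟪T† vb, u⟫ = ⟪((P (v : H₂) : Lᗮ) : H₂), (w : H₂)⟫ := by
        have h2 : ⟪w, P (v : H₂)⟫ = ⟪u, T† vb⟫ :=
          (LinearPMap.adjoint_isFormalAdjoint hSdense) ⟨u, hu'⟩ ⟨P (v : H₂), hxS⟩
        calc ⟪T† vb, u⟫ = (starRingEnd ℂ) ⟪u, T† vb⟫ := (inner_conj_symm _ _).symm
          _ = (starRingEnd ℂ) ⟪w, P (v : H₂)⟫ := by rw [h2]
          _ = ⟪P (v : H₂), w⟫ := inner_conj_symm _ _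
          _ = ⟪((P (v : H₂) : Lᗮ) : H₂), (w : H₂)⟫ := Submodule.coe_inner _ _ _
      have hb2 : ⟪((P (v : H₂) : Lᗮ) : H₂), (w : H₂)⟫ = ⟪(v : H₂), (w : H₂)⟫ := by
        have h0 : ⟪(v : H₂) - (P (v : H₂) : H₂), (w : H₂)⟫ = 0 := hLperp _ haL _ w.2
        have : ⟪(v : H₂), (w : H₂)⟫ = ⟪(v : H₂) - (P (v : H₂) : H₂), (w : H₂)⟫
            + ⟪((P (v : H₂) : Lᗮ) : H₂), (w : H₂)⟫ := by
          rw [← inner_add_left]; congr 1; abel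
        rw [this, h0, zero_add]
      -- the a-part
      have haproj : (Submodule.orthogonalProjection L (v : H₂) : H₂) = (v : H₂) - (P (v : H₂) : H₂) :=
        eq_sub_of_add_eq (Submodule.starProjection_add_starProjection_orthogonal (K := L) (v : H₂))
      have hva2 : va = ⟨(Submodule.orthogonalProjection L (v : H₂) : H₂),
          hL (Submodule.orthogonalProjection L (v : H₂)).2⟩ := Subtype.ext haproj.symm
      have ha1 : ⟪T† va, u⟫ = ⟪B (v : H₂), u⟫ := by rw [hva2]; rfl
      have ha2 : ⟪B (v : H₂), u⟫ = ⟪(v : H₂), ContinuousLinearMap.adjoint B u⟫ :=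
        (ContinuousLinearMap.adjoint_inner_right B (v : H₂) u).symm
      rw [hTv, inner_add_left, hb1, hb2, ha1, ha2, hz, inner_add_right])
    rw [LinearPMap.mem_graph_iff] at hgraph
    obtain ⟨x, hx1, _⟩ := hgraph
    have hxu : (x : H₁) = u := hx1
    exact hxu ▸ x.2
  constructor
  · ext x
    exact ⟨hrev x, hfwd x⟩
  · intro u hu hu'
    exact LinearPMap.adjoint_apply_eq hSdense ⟨u, hu'⟩ (fun x => hcomp u hu x)
end
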